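/- The kinetic jump operators satisfy, for all sites x ≠ y in Fin n: (i) they have degree zero: G L_{x→y} G = L_{x→y}; (ii) the eigenoperator relation F L_{x→y} − L_{x→y} F = (ε_y − ε_x) L_{x→y}, equivalently exp(itF) L_{x→y} exp(−itF) = e^{it(ε_y − ε_x)} L_{x→y} for all t ∈ ℝ; (iii) the β-KMS (detailed balance) relation L_{x→y}ᴴ = e^{−β(ε_y − ε_x)/2} L_{y→x}; in particular Γ_{x→y}/Γ_{y→x} = e^{−β(ε_y − ε_x)}. -/

import Mathlib

open Matrix

noncomputable section JW

/-- The operator algebra of `n` fermionic sites: `2^n × 2^n` complex matrices, with the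
index set realized as `Fin n → Fin 2` (the tensor-product basis). -/
abbrev FermionAlg (n : ℕ) := Matrix (Fin n → Fin 2) (Fin n → Fin 2) ℂ

/-- Jordan–Wigner annihilation operator at site `k`:
`a_k = σ₃^{⊗ k} ⊗ σ⁻ ⊗ 1₂^{⊗ (n−k−1)}`, with `σ⁻ = [[0,0],[1,0]]` and
`σ₃ = [[1,0],[0,−1]]`, written entrywise in the tensor-product basis
(the entry of a tensor product at `(v, w)` is the product of the entries of the factors). -/
def jwA (n : ℕ) (k : Fin n) : FermionAlg n :=
  Matrix.of fun v w => ∏ j : Fin n,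
    if j < k then (if v j = w j then (-1 : ℂ) ^ (v j : ℕ) else 0)
    else if j = k then (if v j = 1 ∧ w j = 0 then 1 else 0)
    else (if v j = w j then 1 else 0)

/-- The number operator `n_k = a_kᴴ a_k`. -/
def numOp (n : ℕ) (k : Fin n) : FermionAlg n := (jwA n k)ᴴ * jwA n k

/-- The grading unitary `G = ∏_k (1 − 2 n_k)`. -/
def grading (n : ℕ) : FermionAlg n :=
  (List.ofFn fun k : Fin n => (1 - 2 • numOp n k)).prod

/-- The free energy `F = Σ_k (ε_k − μ) n_k`. -/
def freeEnergy (n : ℕ) (ε : Fin n → ℝ) (μ : ℝ) : FermionAlg n :=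
  ∑ k, ((ε k - μ : ℝ) : ℂ) • numOp n k

/-- The Gibbs state `ρ(A) = Tr(exp(−βF)·A)/Tr(exp(−βF))`. -/
def gibbs (n : ℕ) (ε : Fin n → ℝ) (μ β : ℝ) (A : FermionAlg n) : ℂ :=
  ((NormedSpace.exp ((-(β : ℂ)) • freeEnergy n ε μ)) * A).trace /
    (NormedSpace.exp ((-(β : ℂ)) • freeEnergy n ε μ)).trace

end JW

noncomputable section

/-- Mott's jump rate `Γ_{x→y} = Γ₀ (e^{−|x−y|/r}/Z) e^{−β(ε_y−ε_x)⁺}`. -/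
def jumpRate (n : ℕ) (Γ₀ r Z β : ℝ) (ε : Fin n → ℝ) (x y : Fin n) : ℝ :=
  Γ₀ * (Real.exp (-(((|(x : ℤ) - (y : ℤ)| : ℤ) : ℝ)) / r) / Z) *
    Real.exp (-(β * max (ε y - ε x) 0))

/-- The kinetic jump operator `L_{x→y} = √Γ_{x→y} · a_yᴴ a_x`. -/
def jumpOp (n : ℕ) (Γ₀ r Z β : ℝ) (ε : Fin n → ℝ) (x y : Fin n) : FermionAlg n :=
  ((Real.sqrt (jumpRate n Γ₀ r Z β ε x y) : ℝ) : ℂ) • ((jwA n y)ᴴ * jwA n x)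

namespace JWaux

open Matrix Finset

variable {n : ℕ}

/-- diagonal value of the number operator -/
def N (k : Fin n) (v : Fin n → Fin 2) : ℂ := if v k = 0 then 1 else 0

/-- the Jordan-Wigner sign string -/
def S (k : Fin n) (v : Fin n → Fin 2) : ℂ :=
  ∏ j : Fin n, if j < k then (-1 : ℂ) ^ (v j : ℕ) else 1

lemma S_mul_self (k : Fin n) (v : Fin n → Fin 2) : S k v * S k v = 1 := by
  rw [S, ← Finset.prod_mul_distrib]
  apply Finset.prod_eq_one
  intro j _
  split_ifs
  · rw [← pow_add, ← two_mul, pow_mul]; simp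
  · simp

lemma S_real (k : Fin n) (v : Fin n → Fin 2) : star (S k v) = S k v := by
  rw [Complex.star_def, S, map_prod]
  apply Finset.prod_congr rfl
  intro j _
  split_ifs <;> simp

lemma jwA_eq (k : Fin n) (v w : Fin n → Fin 2) :
    jwA n k v w =
      if v k = 1 ∧ w k = 0 ∧ ∀ j, j ≠ k → v j = w j then S k v else 0 := by
  simp only [jwA, Matrix.of_apply]
  by_cases hc : v k = 1 ∧ w k = 0 ∧ ∀ j, j ≠ k → v j = w j
  · obtain ⟨h1, h2, h3⟩ := hc
    rw [if_pos ⟨h1, h2, h3⟩, S]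
    apply Finset.prod_congr rfl
    intro j _
    by_cases hlt : j < k
    · simp [hlt, h3 j (ne_of_lt hlt)]
    · by_cases hje : j = k
      · subst hje; simp [hlt, h1, h2]
      · simp [hlt, hje, h3 j hje]
  · rw [if_neg hc]
    by_cases h1 : v k = 1 ∧ w k = 0
    · have hex : ∃ j, j ≠ k ∧ v j ≠ w j := by
        by_contra hno
        push_neg at hno
        exact hc ⟨h1.1, h1.2, fun j hj => hno j hj⟩
      obtain ⟨j, hjk, hjv⟩ := hex
      apply Finset.prod_eq_zero (Finset.mem_univ j)
      by_cases hlt : j < k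
      · simp [hlt, hjv]
      · simp [hlt, hjk, hjv]
    · apply Finset.prod_eq_zero (Finset.mem_univ k)
      simp [lt_irrefl, h1]

lemma numOp_eq (k : Fin n) : numOp n k = Matrix.diagonal (N k) := by
  ext v w
  rw [numOp, Matrix.mul_apply]
  simp only [Matrix.conjTranspose_apply]
  rw [Finset.sum_eq_single (Function.update v k 1)]
  · set u0 := Function.update v k 1 with hu0
    have hu0k : u0 k = 1 := Function.update_self k 1 v
    have hu0j : ∀ j, j ≠ k → u0 j = v j := fun j hj => Function.update_of_ne hj 1 v
    rw [jwA_eq, jwA_eq]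
    by_cases hv : v k = 0
    · rw [if_pos ⟨hu0k, hv, hu0j⟩]
      by_cases hw : w k = 0 ∧ ∀ j, j ≠ k → v j = w j
      · rw [if_pos ⟨hu0k, hw.1, fun j hj => (hu0j j hj).trans (hw.2 j hj)⟩]
        have hvw : v = w := by
          funext j
          by_cases hj : j = k
          · subst hj; rw [hv, hw.1]
          · exact hw.2 j hj
        subst hvw
        rw [Matrix.diagonal_apply_eq, N, if_pos hv, S_real, S_mul_self]
      · push_neg at hw
        have hc2 : ¬(u0 k = 1 ∧ w k = 0 ∧ ∀ j, j ≠ k → u0 j = w j) := by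
          rintro ⟨-, hw0, hall⟩
          obtain ⟨j, hj, hne⟩ := hw hw0
          exact hne ((hu0j j hj).symm.trans (hall j hj))
        rw [if_neg hc2, mul_zero]
        have hvw : v ≠ w := by
          rintro rfl
          obtain ⟨j, hj, hne⟩ := hw hv
          exact hne rfl
        rw [Matrix.diagonal_apply_ne _ hvw]
    · rw [if_neg (by rintro ⟨-, h, -⟩; exact hv h), star_zero, zero_mul]
      by_cases hvw : v = w
      · subst hvw; rw [Matrix.diagonal_apply_eq]; simp [N, hv]
      · rw [Matrix.diagonal_apply_ne _ hvw]
  · intro u _ hu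
    rw [jwA_eq]
    by_cases h : u k = 1 ∧ v k = 0 ∧ ∀ j, j ≠ k → u j = v j
    · exfalso
      apply hu
      funext j
      by_cases hj : j = k
      · subst hj; rw [Function.update_self]; exact h.1
      · rw [Function.update_of_ne hj]; exact h.2.2 j hj
    · rw [if_neg h, star_zero, zero_mul]
  · simp

lemma prod_ofFn_diagonal : ∀ {m : ℕ} (c : Fin m → (Fin n → Fin 2) → ℂ),
    (List.ofFn fun k => Matrix.diagonal (c k)).prod
      = Matrix.diagonal (fun v => ∏ k, c k v)
  | 0, c => by simp [List.ofFn_zero]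
  | (m + 1), c => by
      rw [List.ofFn_succ, List.prod_cons, prod_ofFn_diagonal (fun k => c k.succ),
        Matrix.diagonal_mul_diagonal]
      exact congrArg Matrix.diagonal (funext fun v => (Fin.prod_univ_succ (fun k => c k v)).symm)

lemma grading_eq :
    grading n = Matrix.diagonal (fun v => ∏ k, (1 - 2 * N k v)) := by
  have h1 : ∀ k : Fin n, (1 - 2 • numOp n k : FermionAlg n)
      = Matrix.diagonal (fun v => 1 - 2 * N k v) := by
    intro k
    rw [numOp_eq, two_smul, Matrix.diagonal_add, ← Matrix.diagonal_one (n := Fin n → Fin 2),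
      Matrix.diagonal_sub]
    exact congrArg Matrix.diagonal (funext fun v => by ring)
  rw [grading]
  simp_rw [h1]
  exact prod_ofFn_diagonal _

lemma freeEnergy_eq (ε : Fin n → ℝ) (μ : ℝ) :
    freeEnergy n ε μ
      = Matrix.diagonal (fun v => ∑ k, ((ε k - μ : ℝ) : ℂ) * N k v) := by
  ext v w
  by_cases h : v = w
  · subst h
    simp [freeEnergy, numOp_eq, Matrix.sum_apply, Matrix.smul_apply,
      Matrix.diagonal_apply_eq, smul_eq_mul]
  · simp [freeEnergy, numOp_eq, Matrix.sum_apply, Matrix.smul_apply,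
      Matrix.diagonal_apply_ne _ h]

lemma M_support {x y : Fin n} (hxy : x ≠ y) (v w : Fin n → Fin 2)
    (h : ((jwA n y)ᴴ * jwA n x) v w ≠ 0) :
    v x = 1 ∧ v y = 0 ∧ w x = 0 ∧ w y = 1 ∧ ∀ j, j ≠ x → j ≠ y → v j = w j := by
  rw [Matrix.mul_apply] at h
  obtain ⟨u, -, hu⟩ := Finset.exists_ne_zero_of_sum_ne_zero h
  rw [Matrix.conjTranspose_apply, jwA_eq, jwA_eq] at hu
  by_cases hP : u y = 1 ∧ v y = 0 ∧ ∀ j, j ≠ y → u j = v j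
  · by_cases hQ : u x = 1 ∧ w x = 0 ∧ ∀ j, j ≠ x → u j = w j
    · obtain ⟨h1, h2, h3⟩ := hP
      obtain ⟨h4, h5, h6⟩ := hQ
      refine ⟨(h3 x hxy).symm.trans h4, h2, h5, (h6 y (Ne.symm hxy)).symm.trans h1, ?_⟩
      intro j hjx hjy
      exact (h3 j hjy).symm.trans (h6 j hjx)
    · rw [if_neg hQ, mul_zero] at hu; exact absurd rfl hu
  · rw [if_neg hP, star_zero, zero_mul] at hu; exact absurd rfl hu

lemma f_diff {x y : Fin n} (hxy : x ≠ y) (ε : Fin n → ℝ) (μ : ℝ)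
    (v w : Fin n → Fin 2)
    (hs : v x = 1 ∧ v y = 0 ∧ w x = 0 ∧ w y = 1 ∧ ∀ j, j ≠ x → j ≠ y → v j = w j) :
    (∑ k, ((ε k - μ : ℝ) : ℂ) * N k v) - (∑ k, ((ε k - μ : ℝ) : ℂ) * N k w)
      = ((ε y - ε x : ℝ) : ℂ) := by
  obtain ⟨h1, h2, h3, h4, h5⟩ := hs
  rw [← Finset.sum_sub_distrib]
  rw [← Finset.sum_subset (Finset.subset_univ ({x, y} : Finset (Fin n)))
    (fun k _ hk => by
      simp only [Finset.mem_insert, Finset.mem_singleton, not_or] at hk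
      simp only [JWaux.N, h5 k hk.1 hk.2, sub_self])]
  rw [Finset.sum_pair hxy]
  have e1 : N x v = 0 := by simp [N, h1]
  have e2 : N y v = 1 := by simp [N, h2]
  have e3 : N x w = 1 := by simp [N, h3]
  have e4 : N y w = 0 := by simp [N, h4]
  rw [e1, e2, e3, e4]
  push_cast
  ring

end JWaux

open JWaux Finset in
/-- For sites `x ≠ y`, the kinetic jump operators `L_{x→y}` (i) have
degree zero (`G L G = L`), (ii) satisfy the eigenoperator relation
`F L_{x→y} − L_{x→y} F = (ε_y − ε_x) L_{x→y}`, equivalently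
`exp(itF) L_{x→y} exp(−itF) = e^{it(ε_y−ε_x)} L_{x→y}` for all real `t`, and (iii) satisfy
the β-KMS relation `L_{x→y}ᴴ = e^{−β(ε_y−ε_x)/2} L_{y→x}`; in particular
`Γ_{x→y}/Γ_{y→x} = e^{−β(ε_y−ε_x)}`. -/
theorem kinetic_jump_operators_properties
    (n : ℕ) (hn : 1 ≤ n) (β μ Γ₀ r Z : ℝ) (hβ : 0 < β) (hΓ₀ : 0 < Γ₀) (hr : 0 < r)
    (hZ : 0 < Z) (ε : Fin n → ℝ) (x y : Fin n) (hxy : x ≠ y) :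
    (grading n * jumpOp n Γ₀ r Z β ε x y * grading n = jumpOp n Γ₀ r Z β ε x y) ∧
    (freeEnergy n ε μ * jumpOp n Γ₀ r Z β ε x y
        - jumpOp n Γ₀ r Z β ε x y * freeEnergy n ε μ
      = (((ε y - ε x : ℝ)) : ℂ) • jumpOp n Γ₀ r Z β ε x y) ∧
    (∀ t : ℝ,
      NormedSpace.exp ((Complex.I * t) • freeEnergy n ε μ) * jumpOp n Γ₀ r Z β ε x y *
          NormedSpace.exp ((-(Complex.I * t)) • freeEnergy n ε μ)
      = Complex.exp (Complex.I * t * (((ε y - ε x : ℝ)) : ℂ)) • jumpOp n Γ₀ r Z β ε x y) ∧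
    ((jumpOp n Γ₀ r Z β ε x y)ᴴ
      = ((Real.exp (-(β * (ε y - ε x)) / 2) : ℝ) : ℂ) • jumpOp n Γ₀ r Z β ε y x) ∧
    (jumpRate n Γ₀ r Z β ε x y / jumpRate n Γ₀ r Z β ε y x
      = Real.exp (-(β * (ε y - ε x)))) := by
  set M : FermionAlg n := (jwA n y)ᴴ * jwA n x with hM
  set c : ℂ := ((Real.sqrt (jumpRate n Γ₀ r Z β ε x y) : ℝ) : ℂ) with hc
  have hL : jumpOp n Γ₀ r Z β ε x y = c • M := rfl
  set f : (Fin n → Fin 2) → ℂ := fun v => ∑ k, ((ε k - μ : ℝ) : ℂ) * N k v with hf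
  set g : (Fin n → Fin 2) → ℂ := fun v => ∏ k, (1 - 2 * N k v) with hg
  -- rate relation
  have habs : (|(x : ℤ) - (y : ℤ)| : ℤ) = |(y : ℤ) - (x : ℤ)| := abs_sub_comm _ _
  have hrate : jumpRate n Γ₀ r Z β ε x y
      = Real.exp (-(β * (ε y - ε x))) * jumpRate n Γ₀ r Z β ε y x := by
    rw [jumpRate, jumpRate, habs]
    rw [show Real.exp (-(β * max (ε y - ε x) 0))
        = Real.exp (-(β * (ε y - ε x))) * Real.exp (-(β * max (ε x - ε y) 0)) by
      rw [← Real.exp_add]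
      congr 1
      rcases le_total (ε y - ε x) 0 with h | h
      · rw [max_eq_right h, max_eq_left (by linarith)]; ring
      · rw [max_eq_left h, max_eq_right (by linarith)]; ring]
    ring
  have hry : 0 < jumpRate n Γ₀ r Z β ε y x := by
    rw [jumpRate]
    positivity
  refine ⟨?_, ?_, ?_, ?_, ?_⟩
  · -- (i) grading
    rw [hL, grading_eq, Matrix.mul_smul, Matrix.smul_mul]
    congr 1
    ext v w
    rw [Matrix.mul_diagonal, Matrix.diagonal_mul]
    by_cases h0 : M v w = 0
    · rw [h0]; ring
    · obtain ⟨h1, h2, h3, h4, h5⟩ := M_support hxy v w h0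
      have hgg : g v * g w = 1 := by
        rw [hg]
        simp only
        rw [← Finset.prod_mul_distrib]
        rw [← Finset.prod_subset (Finset.subset_univ ({x, y} : Finset (Fin n)))
          (fun k _ hk => by
            simp only [Finset.mem_insert, Finset.mem_singleton, not_or] at hk
            simp only [JWaux.N, h5 k hk.1 hk.2]
            split_ifs <;> norm_num)]
        rw [Finset.prod_pair hxy]
        have e1 : N x v = 0 := by simp [JWaux.N, h1]
        have e2 : N y v = 1 := by simp [JWaux.N, h2]
        have e3 : N x w = 1 := by simp [JWaux.N, h3]
        have e4 : N y w = 0 := by simp [JWaux.N, h4]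
        rw [e1, e2, e3, e4]
        norm_num
      linear_combination M v w * hgg
  · -- (ii) commutator
    rw [hL, freeEnergy_eq, Matrix.mul_smul, Matrix.smul_mul, ← smul_sub, smul_comm]
    congr 1
    ext v w
    rw [Matrix.sub_apply, Matrix.diagonal_mul, Matrix.mul_diagonal, Matrix.smul_apply,
      smul_eq_mul]
    by_cases h0 : M v w = 0
    · rw [h0]; ring
    · have hd := f_diff hxy ε μ v w (M_support hxy v w h0)
      linear_combination M v w * hd
  · -- (iii) exponential
    intro t
    rw [hL, freeEnergy_eq]
    rw [show ((Complex.I * t) • Matrix.diagonal f : FermionAlg n)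
        = Matrix.diagonal ((Complex.I * t) • f) from (Matrix.diagonal_smul _ _).symm]
    rw [show ((-(Complex.I * t)) • Matrix.diagonal f : FermionAlg n)
        = Matrix.diagonal ((-(Complex.I * t)) • f) from (Matrix.diagonal_smul _ _).symm]
    rw [Matrix.exp_diagonal, Matrix.exp_diagonal]
    ext v w
    rw [Matrix.mul_smul, Matrix.smul_mul, Matrix.smul_apply, Matrix.smul_apply,
      Matrix.mul_diagonal, Matrix.diagonal_mul, Matrix.smul_apply, smul_eq_mul,
      smul_eq_mul, smul_eq_mul]
    simp only [Pi.coe_exp, ← Complex.exp_eq_exp_ℂ]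
    simp only [Pi.smul_apply, smul_eq_mul]
    by_cases h0 : M v w = 0
    · rw [h0]; ring
    · have hd := f_diff hxy ε μ v w (M_support hxy v w h0)
      have hexp : Complex.exp (Complex.I * t * f v) * Complex.exp (-(Complex.I * t) * f w)
          = Complex.exp (Complex.I * t * ((ε y - ε x : ℝ) : ℂ)) := by
        rw [← Complex.exp_add]
        congr 1
        linear_combination (Complex.I * t) * hd
      linear_combination c * M v w * hexp
  · -- (iv) KMS
    rw [hL, Matrix.conjTranspose_smul, Matrix.conjTranspose_mul,
      Matrix.conjTranspose_conjTranspose, jumpOp, smul_smul]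
    congr 1
    rw [hc, Complex.star_def, Complex.conj_ofReal, ← Complex.ofReal_mul]
    congr 1
    rw [hrate, Real.sqrt_mul (Real.exp_pos _).le,
      show Real.exp (-(β * (ε y - ε x)))
        = Real.exp (-(β * (ε y - ε x)) / 2) * Real.exp (-(β * (ε y - ε x)) / 2) by
          rw [← Real.exp_add]; ring_nf,
      Real.sqrt_mul_self (Real.exp_pos _).le]
  · -- (v) ratio
    rw [hrate, mul_div_assoc, div_self hry.ne', mul_one]

end
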